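/- arXiv:2103.16787 — 6 statements merged into one kernel-verified Lean document; each statement's English description precedes it below -/
import Mathlib

section
/- Let M be a randomized algorithm on datasets and fix neighboring datasets h0, h1. Partition the outcome space into good outcomes G (possible under both inputs) and bad outcomes B_b (possible under h_b but not h_{1-b}). Suppose there exists a mechanism A(b) such that for every measurable S ⊆ G, Pr[M(h_b) ∈ S] = Pr[A(b) ∈ S], that Pr[M(h_b) ∈ B_b] ≤ δ for b ∈ {0,1}, and that A satisfies the (ε, δ')-DP inequality between its two inputs, i.e. Pr[A(b) ∈ S] ≤ e^ε Pr[A(1-b) ∈ S] + δ' for all S. Then for every measurable S, Pr[M(h_b) ∈ S] ≤ e^ε Pr[M(h_{1-b}) ∈ S] + δ + δ'. -/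
open MeasureTheory
open scoped ENNReal NNReal

/-- If a mechanism `M` agrees with a mechanism `A` on all good outcomes
(outcomes possible under both neighboring inputs), the bad outcomes `B b` (possible
under input `b` only) have probability at most `δ` under `M b` and probability `0`
under `M (!b)`, and `A` satisfies the `(ε, δ')`-DP inequality between its two inputs,
then `M` satisfies the `(ε, δ + δ')`-DP inequality between the two neighboring inputs. -/
theorem dp_from_good_bad_decomposition
    {Ω : Type*} [MeasurableSpace Ω]
    (M A : Bool → Measure Ω)
    [∀ b, IsProbabilityMeasure (M b)] [∀ b, IsProbabilityMeasure (A b)]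
    (G B0 B1 : Set Ω)
    (hG : MeasurableSet G) (hB0 : MeasurableSet B0) (hB1 : MeasurableSet B1)
    (hpart : G ∪ B0 ∪ B1 = Set.univ)
    (ε : ℝ) (δ δ' : ℝ≥0∞)
    -- on good outcomes, M and A coincide
    (hgood : ∀ (b : Bool) (S : Set Ω), MeasurableSet S → S ⊆ G → M b S = A b S)
    -- bad outcomes have small probability under the input where they are possible
    (hbad0 : M false B0 ≤ δ) (hbad1 : M true B1 ≤ δ)
    -- bad outcomes are impossible under the other input
    (himp0 : M true B0 = 0) (himp1 : M false B1 = 0)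
    -- A is (ε, δ')-DP between its two inputs
    (hA : ∀ (b : Bool) (S : Set Ω), MeasurableSet S →
      A b S ≤ ENNReal.ofReal (Real.exp ε) * A (!b) S + δ') :
    ∀ (b : Bool) (S : Set Ω), MeasurableSet S →
      M b S ≤ ENNReal.ofReal (Real.exp ε) * M (!b) S + δ + δ' := by
  intro b S hS
  have hsub : S ⊆ (S ∩ G) ∪ B0 ∪ B1 := by
    intro x hx
    have : x ∈ G ∪ B0 ∪ B1 := hpart ▸ Set.mem_univ x
    rcases this with (hg | h0) | h1
    · exact Or.inl (Or.inl ⟨hx, hg⟩)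
    · exact Or.inl (Or.inr h0)
    · exact Or.inr h1
  have h1 : M b S ≤ M b (S ∩ G) + M b B0 + M b B1 :=
    le_trans (measure_mono hsub) (le_trans (measure_union_le _ _)
      (add_le_add_left (measure_union_le _ _) _))
  have hbad : M b B0 + M b B1 ≤ δ := by
    cases b
    · rw [himp1, add_zero]; exact hbad0
    · rw [himp0, zero_add]; exact hbad1
  have hgm : M b (S ∩ G) ≤ ENNReal.ofReal (Real.exp ε) * M (!b) S + δ' := by
    rw [hgood b (S ∩ G) (hS.inter hG) Set.inter_subset_right]
    calc A b (S ∩ G) ≤ ENNReal.ofReal (Real.exp ε) * A (!b) (S ∩ G) + δ' :=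
          hA b _ (hS.inter hG)
      _ = ENNReal.ofReal (Real.exp ε) * M (!b) (S ∩ G) + δ' := by
          rw [hgood (!b) (S ∩ G) (hS.inter hG) Set.inter_subset_right]
      _ ≤ ENNReal.ofReal (Real.exp ε) * M (!b) S + δ' := by
          gcongr
          exact Set.inter_subset_left
  calc M b S ≤ M b (S ∩ G) + M b B0 + M b B1 := h1
    _ = M b (S ∩ G) + (M b B0 + M b B1) := add_assoc _ _ _
    _ ≤ (ENNReal.ofReal (Real.exp ε) * M (!b) S + δ') + δ :=
        add_le_add hgm hbad
    _ = ENNReal.ofReal (Real.exp ε) * M (!b) S + δ + δ' := by rw [add_assoc, add_comm δ' δ, ← add_assoc]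
end

section
/- Let h0 and h1 be histograms over a finite index set such that h0(i) ≥ h1(i) for all i, |h0(i) − h1(i)| ≤ 1 for all i, and the set of coordinates where they differ has size at most Δ0. Fix k̄ and let D_b be the index set of the top-k̄ elements of h_b (with a fixed consistent tie-breaking order). Then the number of differing coordinates among common indices of D_0 and D_1, plus |D_0 \ D_1|, is at most Δ0; in particular |D_0 \ D_1| ≤ Δ0 − ℓ where ℓ is the number of indices in D_0 ∩ D_1 on which h0 and h1 differ. -/
/-- For neighboring histograms `h0 ≥ h1` (coordinatewise, gap ≤ 1,
at most `Δ0` differing coordinates) over a finite linearly ordered index set, with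
`D0`, `D1` the top-`kbar` index sets of `h0`, `h1` under a fixed consistent
tie-breaking order, the number of differing coordinates among common indices plus
`|D0 \ D1|` is at most `Δ0`. -/
theorem topk_sets_l0_bound
    {ι : Type*} [Fintype ι] [LinearOrder ι]
    (h0 h1 : ι → ℕ) (kbar Δ0 : ℕ) (D0 D1 : Finset ι)
    (hdom : ∀ i, h1 i ≤ h0 i)
    (hgap : ∀ i, h0 i ≤ h1 i + 1)
    (hl0 : (Finset.univ.filter (fun i => h0 i ≠ h1 i)).card ≤ Δ0)
    (hcard0 : D0.card = kbar) (hcard1 : D1.card = kbar)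
    -- top-kbar with fixed tie-breaking: a member beats every non-member, ties broken
    -- by the fixed linear order on indices (identical for both histograms)
    (htop0 : ∀ i ∈ D0, ∀ j ∉ D0, h0 j < h0 i ∨ (h0 j = h0 i ∧ i < j))
    (htop1 : ∀ i ∈ D1, ∀ j ∉ D1, h1 j < h1 i ∨ (h1 j = h1 i ∧ i < j)) :
    ((D0 ∩ D1).filter (fun i => h0 i ≠ h1 i)).card + (D0 \ D1).card ≤ Δ0 := by
  -- Every element of D0 \ D1 is a differing coordinate.
  have key : ∀ i ∈ D0 \ D1, h0 i ≠ h1 i := by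
    intro i hi hne
    rw [Finset.mem_sdiff] at hi
    obtain ⟨hi0, hi1⟩ := hi
    -- D1 \ D0 is nonempty
    obtain ⟨j, hj⟩ : (D1 \ D0).Nonempty := by
      rw [Finset.sdiff_nonempty]
      intro hsub
      have : D1 = D0 := Finset.eq_of_subset_of_card_le hsub (le_of_eq (hcard0.trans hcard1.symm))
      exact hi1 (this ▸ hi0)
    rw [Finset.mem_sdiff] at hj
    obtain ⟨hj1, hj0⟩ := hj
    have H0 := htop0 i hi0 j hj0
    have H1 := htop1 j hj1 i hi1
    have d := hdom j
    rcases H0 with h | ⟨he0, hlt0⟩ <;> rcases H1 with h' | ⟨he1, hlt1⟩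
    · omega
    · omega
    · omega
    · exact absurd hlt1 hlt0.asymm
  have hsub : (D0 ∩ D1).filter (fun i => h0 i ≠ h1 i) ∪ (D0 \ D1)
      ⊆ Finset.univ.filter (fun i => h0 i ≠ h1 i) := by
    intro i hi
    rw [Finset.mem_union] at hi
    rcases hi with hi | hi
    · rw [Finset.mem_filter] at hi ⊢
      exact ⟨Finset.mem_univ i, hi.2⟩
    · exact Finset.mem_filter.mpr ⟨Finset.mem_univ i, key i hi⟩
  have hdisj : Disjoint ((D0 ∩ D1).filter (fun i => h0 i ≠ h1 i)) (D0 \ D1) := by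
    rw [Finset.disjoint_left]
    intro i hi hi'
    rw [Finset.mem_filter, Finset.mem_inter] at hi
    rw [Finset.mem_sdiff] at hi'
    exact hi'.2 hi.1.2
  calc ((D0 ∩ D1).filter (fun i => h0 i ≠ h1 i)).card + (D0 \ D1).card
      = ((D0 ∩ D1).filter (fun i => h0 i ≠ h1 i) ∪ (D0 \ D1)).card :=
        (Finset.card_union_of_disjoint hdisj).symm
    _ ≤ (Finset.univ.filter (fun i => h0 i ≠ h1 i)).card := Finset.card_le_card hsub
    _ ≤ Δ0 := hl0
end

section
/- Let h0, h1 be histograms with |h0(i) − h1(i)| ≤ 1 for all i and h0 ≥ h1 coordinatewise. Let h0_(k̄+1) and h1_(k̄+1) denote the (k̄+1)-th largest counts of h0 and h1 respectively. Then |h0_(k̄+1) − h1_(k̄+1)| ≤ 1. -/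
lemma sorted_getD_le_iff (l : List ℕ) (hl : l.Pairwise (· ≥ ·)) (k : ℕ) (hk : k < l.length) (v : ℕ) :
    v ≤ l.getD k 0 ↔ k < (l.filter (fun x => v ≤ x)).length := by
  rw [List.getD_eq_getElem l 0 hk]
  have key : ∀ i (hik : i < l.length), i ≤ k → l[k] ≤ l[i] := by
    intro i hik hikk
    rcases eq_or_lt_of_le hikk with h | h
    · subst h; exact le_refl _
    · exact hl.rel_get_of_lt (a := ⟨i, hik⟩) (b := ⟨k, hk⟩) h
  constructor
  · intro hv
    have htake : (l.take (k+1)).filter (fun x => v ≤ x) = l.take (k+1) := by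
      apply List.filter_eq_self.2
      intro a ha
      obtain ⟨i, hi, rfl⟩ := List.mem_take_iff_getElem.1 ha
      have hik : i < k + 1 := lt_of_lt_of_le hi (min_le_left _ _)
      have hil : i < l.length := by omega
      simpa using le_trans hv (key i hil (by omega))
    have := congrArg List.length htake
    calc k < (l.take (k+1)).length := by simp [List.length_take]; omega
      _ = ((l.take (k+1)).filter (fun x => v ≤ x)).length := by rw [htake]
      _ ≤ (l.filter (fun x => v ≤ x)).length := by
          conv_rhs => rw [← List.take_append_drop (k+1) l]
          rw [List.filter_append, List.length_append]; omega
  · intro hcount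
    by_contra hv
    push_neg at hv
    have hdrop : (l.drop k).filter (fun x => v ≤ x) = [] := by
      apply List.filter_eq_nil_iff.2
      intro a ha
      obtain ⟨i, hi, rfl⟩ := List.mem_iff_getElem.1 ha
      rw [List.getElem_drop]
      have hkl : k + i < l.length := by
        rw [List.length_drop] at hi; omega
      have : l[k + i] ≤ l[k] := by
        rcases Nat.eq_zero_or_pos i with h | h
        · subst h; exact le_refl _
        · exact hl.rel_get_of_lt (a := ⟨k, hk⟩) (b := ⟨k + i, hkl⟩) (by simp; omega)
      simp; omega
    have hle : (l.filter (fun x => v ≤ x)).length ≤ k := by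
      conv_lhs => rw [← List.take_append_drop k l]
      rw [List.filter_append, hdrop, List.length_append]
      simpa using (l.take k).length_filter_le _ |>.trans (by simp [List.length_take])
    omega

/-- The `(k+1)`-th largest count of a histogram over a finite index set
(`k` is 0-indexed here: `kthLargest h k` is the entry at position `k` of the list of
counts sorted in decreasing order, so `kthLargest h kbar` is the `(kbar+1)`-th largest). -/
noncomputable def kthLargest {ι : Type*} [Fintype ι] (h : ι → ℕ) (k : ℕ) : ℕ :=
  ((Finset.univ.val.map h).sort (· ≥ ·)).getD k 0


lemma kthLargest_ge_iff {ι : Type*} [Fintype ι] (h : ι → ℕ) (k : ℕ)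
    (hk : k + 1 ≤ Fintype.card ι) (v : ℕ) :
    v ≤ kthLargest h k ↔ k < (Finset.univ.filter (fun i => v ≤ h i)).card := by
  have hlen : ((Finset.univ.val.map h).sort (· ≥ ·)).length = Fintype.card ι := by
    simp [Multiset.length_sort]
  rw [kthLargest, sorted_getD_le_iff _ (Multiset.pairwise_sort _ _) k (by omega) v]
  have heq : (((Finset.univ.val.map h).sort (· ≥ ·)).filter (fun x => v ≤ x)).length
      = (Finset.univ.filter (fun i => v ≤ h i)).card := by
    have h1 : ∀ (l : List ℕ), (l.filter (fun x => v ≤ x)).length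
        = Multiset.countP (fun x => v ≤ x) (↑l) := by
      intro l; simp [Multiset.countP_eq_card_filter, Multiset.filter_coe]
    rw [h1, Multiset.sort_eq, Multiset.countP_map]
    rfl
  rw [heq]

/-- For neighboring histograms `h0 ≥ h1` (coordinatewise, gap at most 1)
over a finite index set with at least `kbar + 1` elements, the `(kbar+1)`-th largest
counts of `h0` and `h1` differ by at most 1. -/
theorem kth_largest_counts_close
    {ι : Type*} [Fintype ι]
    (h0 h1 : ι → ℕ) (kbar : ℕ)
    (hcard : kbar + 1 ≤ Fintype.card ι)
    (hdom : ∀ i, h1 i ≤ h0 i)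
    (hgap : ∀ i, h0 i ≤ h1 i + 1) :
    |(kthLargest h0 kbar : ℤ) - (kthLargest h1 kbar : ℤ)| ≤ 1 := by
  have hA : kthLargest h1 kbar ≤ kthLargest h0 kbar := by
    rw [kthLargest_ge_iff h0 kbar hcard]
    refine lt_of_lt_of_le ((kthLargest_ge_iff h1 kbar hcard _).1 le_rfl) ?_
    apply Finset.card_le_card
    intro i hi
    simp only [Finset.mem_filter, Finset.mem_univ, true_and] at *
    exact hi.trans (hdom i)
  have hB : kthLargest h0 kbar ≤ kthLargest h1 kbar + 1 := by
    set v := kthLargest h0 kbar with hv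
    rcases Nat.eq_zero_or_pos v with h | h
    · omega
    · have : v - 1 ≤ kthLargest h1 kbar := by
        rw [kthLargest_ge_iff h1 kbar hcard]
        refine lt_of_lt_of_le ((kthLargest_ge_iff h0 kbar hcard _).1 le_rfl) ?_
        apply Finset.card_le_card
        intro i hi
        simp only [Finset.mem_filter, Finset.mem_univ, true_and] at *
        have := hgap i; omega
      omega
  rw [abs_le]
  omega
end

section
/- Fix neighboring histograms h0 ≥ h1 (coordinatewise, gap at most 1, differing in at most Δ0 coordinates). Let B be the set of indices i with h1(i) = 0 and h0(i) = 1 that appear in the top-k̄ of h0. Running the Gaussian mechanism with noise N(0, τ²) on the top-k̄ counts of h0 and releasing only indices whose noisy count exceeds an independent noisy threshold h_(k̄+1) + 1 + √2·τ·Φ⁻¹(1−δ) + N(0, τ²), the probability that any index of B appears in the output is at most Δ0·δ. -/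
open MeasureTheory ProbabilityTheory Finset
open scoped ENNReal NNReal

/-- The standard normal CDF `Φ`. -/
noncomputable def stdGaussianCDF (x : ℝ) : ℝ :=
  (gaussianReal 0 1 (Set.Iic x)).toReal

section Aux

open Real

lemma aux_pdf_conv_real {v : ℝ≥0} (hv : v ≠ 0) (u : ℝ) :
    ∫ x, gaussianPDFReal 0 v x * gaussianPDFReal 0 v (x - u) = gaussianPDFReal 0 (2 * v) u := by
  have hv0 : (0:ℝ) < v := by positivity
  have hπv : (0:ℝ) < π * v := by positivity
  have hc : (√(2 * π * (v:ℝ)))⁻¹ * (√(2 * π * (v:ℝ)))⁻¹ = (2 * π * v)⁻¹ := by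
    rw [← mul_inv, Real.mul_self_sqrt (by positivity)]
  have key : ∀ x, gaussianPDFReal 0 v x * gaussianPDFReal 0 v (x - u)
      = ((2 * π * v)⁻¹ * rexp (-u ^ 2 / (4 * v))) * rexp (-(1 / v) * (x - u / 2) ^ 2) := by
    intro x
    simp only [gaussianPDFReal, sub_zero]
    have he : rexp (-x ^ 2 / (2 * (v:ℝ))) * rexp (-(x - u) ^ 2 / (2 * v))
        = rexp (-u ^ 2 / (4 * v)) * rexp (-(1 / v) * (x - u / 2) ^ 2) := by
      rw [← Real.exp_add, ← Real.exp_add]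
      congr 1
      field_simp
      ring
    calc (√(2 * π * (v:ℝ)))⁻¹ * rexp (-x ^ 2 / (2 * v)) * ((√(2 * π * v))⁻¹ * rexp (-(x - u) ^ 2 / (2 * v)))
        = ((√(2 * π * (v:ℝ)))⁻¹ * (√(2 * π * v))⁻¹) * (rexp (-x ^ 2 / (2 * v)) * rexp (-(x - u) ^ 2 / (2 * v))) := by ring
      _ = ((2 * π * v)⁻¹ * rexp (-u ^ 2 / (4 * v))) * rexp (-(1 / v) * (x - u / 2) ^ 2) := by
          rw [hc, he]; ring
  rw [integral_congr_ae (Filter.Eventually.of_forall key), integral_const_mul,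
    integral_sub_right_eq_self (μ := volume) (fun x => rexp (-(1 / v) * x ^ 2)) (u / 2),
    integral_gaussian]
  simp only [gaussianPDFReal, sub_zero]
  rw [show π / (1 / (v:ℝ)) = π * v by field_simp]
  have h4 : √(2 * π * ((2:ℝ≥0) * v : ℝ≥0)) = 2 * √(π * v) := by
    push_cast
    rw [show (2:ℝ) * π * (2 * v) = 2 ^ 2 * (π * v) by ring, Real.sqrt_mul (by positivity),
      Real.sqrt_sq (by norm_num)]
  rw [h4]
  have hs : (0:ℝ) < √(π * v) := Real.sqrt_pos.mpr hπv
  have hss : √(π * (v:ℝ)) * √(π * v) = π * v := Real.mul_self_sqrt (le_of_lt hπv)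
  have hu : -u ^ 2 / (2 * ((2:ℝ≥0) * v : ℝ≥0) : ℝ) = -u ^ 2 / (4 * v) := by push_cast; ring_nf
  rw [hu]
  rw [show (2 * π * (v:ℝ))⁻¹ * rexp (-u ^ 2 / (4 * v)) * √(π * v)
      = ((2 * π * v)⁻¹ * (√(π * v) * √(π * v))) * rexp (-u ^ 2 / (4 * v)) * (√(π * v))⁻¹ by
        field_simp, hss]
  rw [show (2 * π * (v:ℝ))⁻¹ * (π * v) = 2⁻¹ by field_simp]
  ring_nf

lemma aux_integrable_pdf_mul (v : ℝ≥0) (u : ℝ) :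
    Integrable (fun x => gaussianPDFReal 0 v x * gaussianPDFReal 0 v (x - u)) := by
  have hshift : ∀ x, gaussianPDFReal 0 v (x - u) = gaussianPDFReal u v x := by
    intro x; simp [gaussianPDFReal]
  simp only [hshift]
  refine (integrable_gaussianPDFReal u v).bdd_mul (c := (√(2 * π * v))⁻¹)
    (measurable_gaussianPDFReal 0 v).aestronglyMeasurable (Filter.Eventually.of_forall fun x => ?_)
  rw [Real.norm_eq_abs, abs_of_nonneg (gaussianPDFReal_nonneg 0 v x)]
  unfold gaussianPDFReal
  calc (√(2 * π * (v:ℝ)))⁻¹ * rexp (-(x - 0) ^ 2 / (2 * v))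
      ≤ (√(2 * π * (v:ℝ)))⁻¹ * 1 := by
        refine mul_le_mul_of_nonneg_left ?_ (by positivity)
        rw [Real.exp_le_one_iff]
        exact div_nonpos_of_nonpos_of_nonneg (neg_nonpos.mpr (sq_nonneg _)) (by positivity)
    _ = (√(2 * π * (v:ℝ)))⁻¹ := mul_one _

lemma aux_gaussian_map_sub {v : ℝ≥0} (hv : v ≠ 0) :
    Measure.map (fun p : ℝ × ℝ => p.1 - p.2) ((gaussianReal 0 v).prod (gaussianReal 0 v))
      = gaussianReal 0 (2 * v) := by
  have h2v : (2 : ℝ≥0) * v ≠ 0 := by simp [hv]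
  ext s hs
  rw [Measure.map_apply (show Measurable (fun p : ℝ × ℝ => p.1 - p.2) from measurable_fst.sub measurable_snd) hs,
    Measure.prod_apply ((show Measurable (fun p : ℝ × ℝ => p.1 - p.2) from measurable_fst.sub measurable_snd) hs)]
  have step1 : ∀ x : ℝ, gaussianReal 0 v (Prod.mk x ⁻¹' ((fun p : ℝ × ℝ => p.1 - p.2) ⁻¹' s))
      = ∫⁻ u in s, gaussianPDF 0 v (x - u) := by
    intro x
    have hpre : (Prod.mk x ⁻¹' ((fun p : ℝ × ℝ => p.1 - p.2) ⁻¹' s)) = (fun y => x - y) ⁻¹' s := rfl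
    have hms : MeasurableSet ((fun y : ℝ => x - y) ⁻¹' s) := measurable_id.const_sub x hs
    rw [hpre, gaussianReal_of_var_ne_zero _ hv, withDensity_apply _ hms]
    have mp : MeasurePreserving (fun y : ℝ => x - y) volume volume :=
      Measure.measurePreserving_sub_left volume x
    have emb : MeasurableEmbedding (fun y : ℝ => x - y) :=
      (MeasurableEquiv.subLeft x).measurableEmbedding
    have := mp.setLIntegral_comp_preimage_emb emb (fun u => gaussianPDF 0 v (x - u)) s
    simp only [sub_sub_cancel] at this
    exact this
  simp_rw [step1]
  have hg : Measurable fun x : ℝ => ∫⁻ u in s, gaussianPDF 0 v (x - u) :=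
    Measurable.lintegral_prod_right' (f := fun p : ℝ × ℝ => gaussianPDF 0 v (p.1 - p.2))
      ((measurable_gaussianPDF 0 v).comp (measurable_fst.sub measurable_snd))
  rw [gaussianReal_of_var_ne_zero _ hv,
    lintegral_withDensity_eq_lintegral_mul volume (measurable_gaussianPDF 0 v) hg]
  simp only [Pi.mul_apply]
  have step2 : ∀ x : ℝ, gaussianPDF 0 v x * ∫⁻ u in s, gaussianPDF 0 v (x - u)
      = ∫⁻ u in s, gaussianPDF 0 v x * gaussianPDF 0 v (x - u) :=
    fun x => (lintegral_const_mul _ ((measurable_gaussianPDF 0 v).comp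
      (measurable_const.sub measurable_id))).symm
  simp_rw [step2]
  rw [lintegral_lintegral_swap (((measurable_gaussianPDF 0 v).comp measurable_fst).mul
      ((measurable_gaussianPDF 0 v).comp (measurable_fst.sub measurable_snd))).aemeasurable]
  rw [gaussianReal_apply _ h2v s]
  refine setLIntegral_congr_fun hs (fun u _ => ?_)
  calc ∫⁻ x, gaussianPDF 0 v x * gaussianPDF 0 v (x - u)
      = ∫⁻ x, ENNReal.ofReal (gaussianPDFReal 0 v x * gaussianPDFReal 0 v (x - u)) := by
        congr 1; ext x
        rw [gaussianPDF, gaussianPDF, ← ENNReal.ofReal_mul (gaussianPDFReal_nonneg 0 v x)]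
    _ = ENNReal.ofReal (∫ x, gaussianPDFReal 0 v x * gaussianPDFReal 0 v (x - u)) :=
        (ofReal_integral_eq_lintegral_ofReal (aux_integrable_pdf_mul v u)
          (Filter.Eventually.of_forall fun x =>
            mul_nonneg (gaussianPDFReal_nonneg 0 v x) (gaussianPDFReal_nonneg 0 v _))).symm
    _ = gaussianPDF 0 (2 * v) u := by rw [aux_pdf_conv_real hv u]; rfl

lemma aux_pi_map_eval {ι : Type*} [Fintype ι] [DecidableEq ι] (μ : Measure ℝ)
    [IsProbabilityMeasure μ] (i : ι) :
    (Measure.pi fun _ : ι => μ).map (Function.eval i) = μ := by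
  ext s hs
  rw [Measure.map_apply (measurable_pi_apply i) hs]
  have : Function.eval i ⁻¹' s
      = Set.pi Set.univ (Function.update (fun _ : ι => (Set.univ : Set ℝ)) i s) := by
    ext x
    simp only [Set.mem_preimage, Set.mem_pi, Set.mem_univ, true_implies]
    constructor
    · intro hx j
      rcases eq_or_ne j i with rfl | hj
      · simpa using hx
      · simp [Function.update_of_ne hj]
    · intro hx
      simpa using hx i
  rw [this, Measure.pi_pi]
  rw [Finset.prod_eq_single i (fun j _ hj => by simp [Function.update_of_ne hj]) (by simp)]
  simp

lemma aux_gaussian_tail (q δ : ℝ) (hδ : 0 < δ) (hδ1 : δ < 1) (hq : stdGaussianCDF q = 1 - δ) :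
    gaussianReal 0 1 (Set.Ioi q) = ENNReal.ofReal δ := by
  have h1 : gaussianReal 0 1 (Set.Iic q) = ENNReal.ofReal (1 - δ) := by
    rw [← hq, stdGaussianCDF, ENNReal.ofReal_toReal (measure_ne_top _ _)]
  have h2 : gaussianReal 0 1 (Set.Iic q) + gaussianReal 0 1 (Set.Ioi q) = 1 := by
    rw [← measure_union (Set.Iic_disjoint_Ioi le_rfl) measurableSet_Ioi, Set.Iic_union_Ioi,
      measure_univ]
  rw [h1] at h2
  have h3 : (1 : ℝ≥0∞) = ENNReal.ofReal (1 - δ) + ENNReal.ofReal δ := by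
    rw [← ENNReal.ofReal_add (by linarith) (le_of_lt hδ), ← ENNReal.ofReal_one]
    norm_num
  rw [h3] at h2
  exact (ENNReal.add_right_inj (by simp)).mp h2

lemma aux_single_prob {ι : Type*} [Fintype ι] [DecidableEq ι] (i : ι)
    (τ : ℝ≥0) (hτ : 0 < τ) (q δ : ℝ) (hδ : 0 < δ) (hδ1 : δ < 1)
    (hq : stdGaussianCDF q = 1 - δ) :
    ((Measure.pi fun _ : ι => gaussianReal 0 (τ ^ 2)).prod (gaussianReal 0 (τ ^ 2)))
      {Z : (ι → ℝ) × ℝ | Real.sqrt 2 * τ * q + Z.2 < Z.1 i} = ENNReal.ofReal δ := by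
  set ν := gaussianReal 0 (τ ^ 2) with hν
  have hv : (τ ^ 2 : ℝ≥0) ≠ 0 := pow_ne_zero _ hτ.ne'
  have hc : (0:ℝ) < Real.sqrt 2 * τ := by positivity
  have hT : Measurable fun Z : (ι → ℝ) × ℝ => ((Z.1 i, Z.2) : ℝ × ℝ) :=
    ((measurable_pi_apply i).comp measurable_fst).prodMk measurable_snd
  have hmapT : ((Measure.pi fun _ : ι => ν).prod ν).map
      (fun Z : (ι → ℝ) × ℝ => ((Z.1 i, Z.2) : ℝ × ℝ)) = ν.prod ν := by
    have h := Measure.map_prod_map (Measure.pi fun _ : ι => ν) ν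
      (measurable_pi_apply i) (measurable_id (α := ℝ))
    rw [aux_pi_map_eval ν i, Measure.map_id] at h
    exact h.symm
  have hA : MeasurableSet {p : ℝ × ℝ | Real.sqrt 2 * τ * q + p.2 < p.1} :=
    measurableSet_lt (measurable_const.add measurable_snd) measurable_fst
  have hset : {Z : (ι → ℝ) × ℝ | Real.sqrt 2 * τ * q + Z.2 < Z.1 i}
      = (fun Z : (ι → ℝ) × ℝ => ((Z.1 i, Z.2) : ℝ × ℝ)) ⁻¹'
        {p : ℝ × ℝ | Real.sqrt 2 * τ * q + p.2 < p.1} := rfl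
  rw [hset, ← Measure.map_apply hT hA, hmapT]
  have hA2 : {p : ℝ × ℝ | Real.sqrt 2 * τ * q + p.2 < p.1}
      = (fun p : ℝ × ℝ => p.1 - p.2) ⁻¹' Set.Ioi (Real.sqrt 2 * τ * q) := by
    ext p
    simp [Set.mem_Ioi, lt_sub_iff_add_lt]
  rw [hA2, ← Measure.map_apply (show Measurable (fun p : ℝ × ℝ => p.1 - p.2) from measurable_fst.sub measurable_snd) measurableSet_Ioi,
    aux_gaussian_map_sub hv]
  have h2τ : (2 : ℝ≥0) * τ ^ 2 = ⟨(Real.sqrt 2 * τ) ^ 2, sq_nonneg _⟩ * 1 := by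
    ext
    push_cast
    show (2:ℝ) * (τ:ℝ) ^ 2 = (Real.sqrt 2 * τ) ^ 2 * 1
    rw [mul_pow, Real.sq_sqrt (by norm_num : (0:ℝ) ≤ 2)]
    ring
  have hmap : gaussianReal 0 (⟨(Real.sqrt 2 * τ) ^ 2, sq_nonneg _⟩ * 1)
      = (gaussianReal 0 1).map (fun x => Real.sqrt 2 * τ * x) := by
    have h := gaussianReal_map_const_mul (μ := 0) (v := 1) (Real.sqrt 2 * τ)
    rw [mul_zero] at h
    exact h.symm
  rw [h2τ, hmap, Measure.map_apply (measurable_const_mul _) measurableSet_Ioi]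
  have hpre : (fun x : ℝ => Real.sqrt 2 * τ * x) ⁻¹' Set.Ioi (Real.sqrt 2 * τ * q)
      = Set.Ioi q := by
    ext x
    simp [Set.mem_Ioi, mul_lt_mul_iff_right₀ hc]
  rw [hpre]
  exact aux_gaussian_tail q δ hδ hδ1 hq

end Aux

/-- For neighboring histograms `h0 ≥ h1` (coordinatewise, gap ≤ 1, at
most `Δ0` differing coordinates), let `B` be the set of indices in the top-`kbar`
set `D0` of `h0` with `h1 i = 0` and `h0 i = 1`.  Adding independent `N(0, τ²)`
noise to the top-`kbar` counts and releasing only indices whose noisy count exceeds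
the independent noisy threshold `h_(kbar+1) + 1 + √2·τ·Φ⁻¹(1−δ) + N(0, τ²)`, the
probability that any index of `B` appears in the output is at most `Δ0·δ`. -/
theorem bad_elements_released_prob_le
    {ι : Type*} [Fintype ι] [DecidableEq ι]
    (h0 h1 : ι → ℕ) (kbar Δ0 : ℕ) (D0 : Finset ι)
    (hdom : ∀ i, h1 i ≤ h0 i) (hgap : ∀ i, h0 i ≤ h1 i + 1)
    (hl0 : (Finset.univ.filter (fun i => h0 i ≠ h1 i)).card ≤ Δ0)
    (hcard0 : D0.card = kbar)
    (htop0 : ∀ i ∈ D0, ∀ j ∉ D0, h0 j ≤ h0 i)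
    (τ : ℝ≥0) (hτ : 0 < τ) (δ : ℝ) (hδ : 0 < δ) (hδ1 : δ < 1)
    (q : ℝ) (hq : stdGaussianCDF q = 1 - δ) :
    ((Measure.pi fun _ : ι => gaussianReal 0 (τ ^ 2)).prod (gaussianReal 0 (τ ^ 2)))
        {Z : (ι → ℝ) × ℝ | ∃ i ∈ D0, h1 i = 0 ∧ h0 i = 1 ∧
          (kthLargest h0 kbar : ℝ) + 1 + Real.sqrt 2 * τ * q + Z.2
            < (h0 i : ℝ) + Z.1 i}
      ≤ ENNReal.ofReal (Δ0 * δ) := by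
  classical
  set P := (Measure.pi fun _ : ι => gaussianReal 0 (τ ^ 2)).prod (gaussianReal 0 (τ ^ 2)) with hP
  set B : Finset ι := D0.filter (fun i => h1 i = 0 ∧ h0 i = 1) with hB
  have hBsub : B ⊆ Finset.univ.filter (fun i => h0 i ≠ h1 i) := by
    intro i hi
    simp only [hB, Finset.mem_filter] at hi ⊢
    exact ⟨Finset.mem_univ i, by omega⟩
  have hBcard : B.card ≤ Δ0 := le_trans (Finset.card_le_card hBsub) hl0
  have hsub : {Z : (ι → ℝ) × ℝ | ∃ i ∈ D0, h1 i = 0 ∧ h0 i = 1 ∧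
        (kthLargest h0 kbar : ℝ) + 1 + Real.sqrt 2 * τ * q + Z.2 < (h0 i : ℝ) + Z.1 i}
      ⊆ ⋃ i ∈ B, {Z : (ι → ℝ) × ℝ | Real.sqrt 2 * τ * q + Z.2 < Z.1 i} := by
    rintro Z ⟨i, hiD, h1i, h0i, hlt⟩
    refine Set.mem_biUnion (Finset.mem_filter.mpr ⟨hiD, h1i, h0i⟩) ?_
    have hk : (0:ℝ) ≤ (kthLargest h0 kbar : ℝ) := Nat.cast_nonneg _
    have h0i' : (h0 i : ℝ) = 1 := by rw [h0i]; norm_num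
    rw [h0i'] at hlt
    exact Set.mem_setOf.mpr (by linarith)
  calc P {Z : (ι → ℝ) × ℝ | ∃ i ∈ D0, h1 i = 0 ∧ h0 i = 1 ∧
          (kthLargest h0 kbar : ℝ) + 1 + Real.sqrt 2 * τ * q + Z.2 < (h0 i : ℝ) + Z.1 i}
      ≤ P (⋃ i ∈ B, {Z : (ι → ℝ) × ℝ | Real.sqrt 2 * τ * q + Z.2 < Z.1 i}) :=
        measure_mono hsub
    _ ≤ ∑ i ∈ B, P {Z : (ι → ℝ) × ℝ | Real.sqrt 2 * τ * q + Z.2 < Z.1 i} :=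
        measure_biUnion_finset_le B _
    _ = ∑ _i ∈ B, ENNReal.ofReal δ :=
        Finset.sum_congr rfl fun i _ => aux_single_prob i τ hτ q δ hδ hδ1 hq
    _ = (B.card : ℝ≥0∞) * ENNReal.ofReal δ := by
        rw [Finset.sum_const, nsmul_eq_mul]
    _ ≤ (Δ0 : ℝ≥0∞) * ENNReal.ofReal δ :=
        mul_le_mul_left (by exact_mod_cast hBcard) _
    _ = ENNReal.ofReal (Δ0 * δ) := by
        rw [ENNReal.ofReal_mul (Nat.cast_nonneg _), ENNReal.ofReal_natCast]
end

section
/- Fix T and define g(r) = (r − 1)·(⌊log_r T⌋ + 1)² for integer r ∈ {2,…,T}. Then for every T ≥ 2, g attains its minimum at some r* with 2 ≤ r* ≤ T, and for all sufficiently large T, g(r*) < g(2); in particular for T ≥ 100, there exists r ∈ {3,…,10} with (r−1)·(⌊log_r T⌋+1)² < (⌊log_2 T⌋+1)². -/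
/-- Let `g r = (r − 1)·(⌊log_r T⌋ + 1)²` be (proportional to) the
per-count noise variance of the base-`r` generalized Binary Mechanism.  For every
`T ≥ 2`, `g` attains its minimum over `r ∈ {2, …, T}` at some `r*`, and for all
`T ≥ 100` there is a base `r ∈ {3, …, 10}` with `g r < g 2 = (⌊log_2 T⌋ + 1)²`. -/
theorem optimal_base_beats_two (T : ℕ) (hT : 2 ≤ T) :
    (∃ rstar, 2 ≤ rstar ∧ rstar ≤ T ∧
      ∀ r, 2 ≤ r → r ≤ T →
        (rstar - 1) * (Nat.log rstar T + 1) ^ 2 ≤ (r - 1) * (Nat.log r T + 1) ^ 2) ∧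
    (100 ≤ T →
      ∃ r, 3 ≤ r ∧ r ≤ 10 ∧
        (r - 1) * (Nat.log r T + 1) ^ 2 < (Nat.log 2 T + 1) ^ 2) := by
  constructor
  · obtain ⟨rstar, hmem, hmin⟩ := Finset.exists_min_image (Finset.Icc 2 T)
      (fun r => (r - 1) * (Nat.log r T + 1) ^ 2)
      ⟨2, Finset.mem_Icc.mpr ⟨le_refl 2, hT⟩⟩
    obtain ⟨h1, h2⟩ := Finset.mem_Icc.mp hmem
    exact ⟨rstar, h1, h2, fun r hr1 hr2 => hmin r (Finset.mem_Icc.mpr ⟨hr1, hr2⟩)⟩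
  · intro h100
    refine ⟨4, by norm_num, by norm_num, ?_⟩
    set m := Nat.log 4 T with hm'
    set k := Nat.log 2 T with hk'
    have h1 : 4 ^ m ≤ T := Nat.pow_log_le_self 4 (by omega)
    have h2 : T < 2 ^ (k + 1) := Nat.lt_pow_succ_log_self (by norm_num) T
    have h2m : 2 ^ (2 * m) < 2 ^ (k + 1) := by
      calc 2 ^ (2 * m) = 4 ^ m := by rw [pow_mul]; norm_num
      _ ≤ T := h1
      _ < 2 ^ (k + 1) := h2
    have hk : 2 * m ≤ k := by
      have := (Nat.pow_lt_pow_iff_right (by norm_num : 1 < 2)).mp h2m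
      omega
    have hm : 3 ≤ m := Nat.le_log_of_pow_le (by norm_num) (by norm_num; omega)
    show 3 * (m + 1) ^ 2 < (k + 1) ^ 2
    nlinarith
end

section
/- Let h0 and h1 be neighboring histograms with ℓ0-sensitivity Δ0 and ℓ∞-sensitivity 1, and let v0 and v1 be the relabeled top-k̄ histograms constructed by keeping common top-k̄ indices with their original counts, assigning common 'bad' labels B_1, B_2, … (in a fixed order) to the uncommon indices of each, and appending a ⊥ element with count h_(k̄+1) + 1 + √2·τ·Φ⁻¹(1−δ). Then v0 and v1 differ in at most Δ0 coordinates and each differing coordinate differs by at most 1; hence ‖v0 − v1‖₂ ≤ √Δ0. -/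
open MeasureTheory ProbabilityTheory Finset
open scoped ENNReal NNReal

/-- The relabeled histogram: common top-`kbar` indices keep their original counts
(indices outside the common set are zeroed out for both histograms), the `nB`
uncommon indices are enumerated by `e` and assigned the common "bad" labels
`B_1, …, B_nB` (the `Fin nB` summand), and a `⊥` element (the `Unit` summand)
carries the threshold count. -/
noncomputable def relabeled {ι : Type*} [DecidableEq ι] {nB : ℕ}
    (h : ι → ℕ) (C : Finset ι) (e : Fin nB → ι) (thresh : ℝ) :
    (ι ⊕ Fin nB) ⊕ Unit → ℝ
  | .inl (.inl i) => if i ∈ C then (h i : ℝ) else 0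
  | .inl (.inr b) => h (e b)
  | .inr _ => thresh

lemma kthLargest_spec {ι : Type*} [Fintype ι] [DecidableEq ι] (h : ι → ℕ) (k : ℕ) (D : Finset ι)
    (hD : D.card = k) (hk : k + 1 ≤ Fintype.card ι)
    (htop : ∀ i ∈ D, ∀ j ∉ D, h j ≤ h i) :
    (∃ j ∉ D, h j = kthLargest h k) ∧ ∀ j ∉ D, h j ≤ kthLargest h k := by
  classical
  set L1 := (D.val.map h).sort (· ≥ ·) with hL1
  set L2 := (Dᶜ.val.map h).sort (· ≥ ·) with hL2
  have hval : (univ : Finset ι).val.map h = D.val.map h + Dᶜ.val.map h := by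
    rw [← Multiset.map_add]
    congr 1
    rw [Finset.compl_eq_univ_sdiff, Finset.sdiff_val]
    exact (add_tsub_cancel_of_le (Finset.val_le_iff.mpr (Finset.subset_univ D))).symm
  have hmemL1 : ∀ a ∈ L1, ∃ i ∈ D, h i = a := by
    intro a ha
    have : a ∈ (D.val.map h) := by rw [← Multiset.sort_eq (D.val.map h) (· ≥ ·)]; exact_mod_cast ha
    simpa using Multiset.mem_map.mp this
  have hmemL2 : ∀ a ∈ L2, ∃ j ∉ D, h j = a := by
    intro a ha
    have : a ∈ (Dᶜ.val.map h) := by rw [← Multiset.sort_eq (Dᶜ.val.map h) (· ≥ ·)]; exact_mod_cast ha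
    obtain ⟨j, hj, rfl⟩ := Multiset.mem_map.mp this
    exact ⟨j, by simpa using hj, rfl⟩
  have hsorted : (L1 ++ L2).Pairwise (· ≥ ·) := by
    rw [List.pairwise_append]
    refine ⟨Multiset.pairwise_sort _ _, Multiset.pairwise_sort _ _, ?_⟩
    intro a ha b hb
    obtain ⟨i, hi, rfl⟩ := hmemL1 a ha
    obtain ⟨j, hj, rfl⟩ := hmemL2 b hb
    exact htop i hi j hj
  have hEq : ((univ : Finset ι).val.map h).sort (· ≥ ·) = L1 ++ L2 := by
    apply List.Perm.eq_of_pairwise' (Multiset.pairwise_sort _ _) hsorted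
    rw [← Multiset.coe_eq_coe, ← Multiset.coe_add, hL1, hL2]
    simp only [Multiset.sort_eq]
    exact hval
  have hlen1 : L1.length = k := by
    rw [hL1, Multiset.length_sort, Multiset.card_map]
    exact hD
  have hlen2 : 1 ≤ L2.length := by
    rw [hL2, Multiset.length_sort, Multiset.card_map]
    have h2 : Multiset.card Dᶜ.val = Fintype.card ι - k := by
      rw [← Finset.card_def, Finset.card_compl, hD]
    omega
  have hkth : kthLargest h k = L2.getD 0 0 := by
    rw [kthLargest, hEq, List.getD_append_right _ _ _ _ (le_of_eq hlen1), hlen1]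
    simp
  obtain ⟨x, t, hxt⟩ : ∃ x t, L2 = x :: t := by
    cases hL : L2 with
    | nil => rw [hL] at hlen2; simp at hlen2
    | cons x t => exact ⟨x, t, rfl⟩
  have hx : kthLargest h k = x := by rw [hkth, hxt]; rfl
  have hsort2 : L2.Pairwise (· ≥ ·) := Multiset.pairwise_sort _ _
  rw [hxt, List.pairwise_cons] at hsort2
  constructor
  · obtain ⟨j, hj, hje⟩ := hmemL2 x (by rw [hxt]; exact List.mem_cons_self (a := x) (l := t))
    exact ⟨j, hj, by rw [hje, hx]⟩
  · intro j hj
    have hmem : h j ∈ (Dᶜ.val.map h) := Multiset.mem_map.mpr ⟨j, by simpa using hj, rfl⟩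
    rw [← Multiset.sort_eq (Dᶜ.val.map h) (· ≥ ·), ← hL2] at hmem
    have hmem' := Multiset.mem_coe.mp hmem
    rw [hxt] at hmem'
    rcases List.mem_cons.mp hmem' with hc | hc
    · rw [hc, hx]
    · rw [hx]; exact hsort2.1 _ hc

/-- For neighboring histograms `h0 ≥ h1` (gap ≤ 1, at most `Δ0`
differing coordinates), the relabeled top-`kbar` histograms `v0, v1` — common
top-`kbar` indices with original counts, uncommon indices paired via common bad
labels in a fixed order, and the `⊥` threshold `h_(kbar+1) + 1 + √2·τ·Φ⁻¹(1−δ)` —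
differ in at most `Δ0` coordinates, each by at most 1; hence `‖v0 − v1‖₂ ≤ √Δ0`. -/
theorem relabeled_histograms_sensitivity
    {ι : Type*} [Fintype ι] [LinearOrder ι]
    (h0 h1 : ι → ℕ) (kbar Δ0 nB : ℕ) (D0 D1 : Finset ι)
    (hdom : ∀ i, h1 i ≤ h0 i) (hgap : ∀ i, h0 i ≤ h1 i + 1)
    (hl0 : (Finset.univ.filter (fun i => h0 i ≠ h1 i)).card ≤ Δ0)
    (hcard : kbar + 1 ≤ Fintype.card ι)
    (hcard0 : D0.card = kbar) (hcard1 : D1.card = kbar)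
    (htop0 : ∀ i ∈ D0, ∀ j ∉ D0, h0 j < h0 i ∨ (h0 j = h0 i ∧ i < j))
    (htop1 : ∀ i ∈ D1, ∀ j ∉ D1, h1 j < h1 i ∨ (h1 j = h1 i ∧ i < j))
    -- enumerations (in a fixed order) of the uncommon indices of each histogram
    (e0 : Fin nB → ι) (e1 : Fin nB → ι)
    (he0inj : Function.Injective e0) (he1inj : Function.Injective e1)
    (he0 : ∀ b, e0 b ∈ D0 \ D1) (he1 : ∀ b, e1 b ∈ D1 \ D0)
    (hnB : nB = (D0 \ D1).card)
    (τ : ℝ≥0) (hτ : 0 < τ) (δ : ℝ) (hδ : 0 < δ) (hδ1 : δ < 1)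
    (q : ℝ) (hq : stdGaussianCDF q = 1 - δ) :
    let v0 := relabeled h0 (D0 ∩ D1) e0
      ((kthLargest h0 kbar : ℝ) + 1 + Real.sqrt 2 * τ * q)
    let v1 := relabeled h1 (D0 ∩ D1) e1
      ((kthLargest h1 kbar : ℝ) + 1 + Real.sqrt 2 * τ * q)
    Set.ncard {x | v0 x ≠ v1 x} ≤ Δ0 ∧
    (∀ x, |v0 x - v1 x| ≤ 1) ∧
    Real.sqrt (∑ x, (v0 x - v1 x) ^ 2) ≤ Real.sqrt Δ0 := by
  classical
  intro v0 v1
  have htop0' : ∀ i ∈ D0, ∀ j ∉ D0, h0 j ≤ h0 i := by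
    intro i hi j hj; rcases htop0 i hi j hj with h | h
    exacts [h.le, h.1.le]
  have htop1' : ∀ i ∈ D1, ∀ j ∉ D1, h1 j ≤ h1 i := by
    intro i hi j hj; rcases htop1 i hi j hj with h | h
    exacts [h.le, h.1.le]
  -- value lemmas
  have hv0c : ∀ i : ι, v0 (.inl (.inl i)) = if i ∈ D0 ∩ D1 then (h0 i : ℝ) else 0 := fun _ => rfl
  have hv1c : ∀ i : ι, v1 (.inl (.inl i)) = if i ∈ D0 ∩ D1 then (h1 i : ℝ) else 0 := fun _ => rfl
  have hv0b : ∀ c : Fin nB, v0 (.inl (.inr c)) = (h0 (e0 c) : ℝ) := fun _ => rfl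
  have hv1b : ∀ c : Fin nB, v1 (.inl (.inr c)) = (h1 (e1 c) : ℝ) := fun _ => rfl
  have hv0u : ∀ u : Unit, v0 (.inr u) =
      (kthLargest h0 kbar : ℝ) + 1 + Real.sqrt 2 * τ * q := fun _ => rfl
  have hv1u : ∀ u : Unit, v1 (.inr u) =
      (kthLargest h1 kbar : ℝ) + 1 + Real.sqrt 2 * τ * q := fun _ => rfl
  obtain ⟨⟨j0, hj0D, hj0⟩, hmax0⟩ := kthLargest_spec h0 kbar D0 hcard0 hcard htop0'
  obtain ⟨⟨j1, hj1D, hj1⟩, hmax1⟩ := kthLargest_spec h1 kbar D1 hcard1 hcard htop1'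
  set a := kthLargest h0 kbar with ha
  set b := kthLargest h1 kbar with hb
  have hsd : (D0 \ D1).card = (D1 \ D0).card :=
    Finset.card_sdiff_comm (hcard0.trans hcard1.symm)
  have hba : b ≤ a := by
    by_cases hj1D0 : j1 ∈ D0
    · have hne : (D1 \ D0).Nonempty := by
        rw [← Finset.card_pos, ← hsd, Finset.card_pos]
        exact ⟨j1, Finset.mem_sdiff.mpr ⟨hj1D0, hj1D⟩⟩
      obtain ⟨i, hi⟩ := hne
      rw [Finset.mem_sdiff] at hi
      calc b = h1 j1 := hj1.symm
        _ ≤ h1 i := htop1' i hi.1 j1 hj1D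
        _ ≤ h0 i := hdom i
        _ ≤ a := hmax0 i hi.2
    · calc b = h1 j1 := hj1.symm
        _ ≤ h0 j1 := hdom j1
        _ ≤ a := hmax0 j1 hj1D0
  have hab1 : a ≤ b + 1 := by
    by_cases hj0D1 : j0 ∈ D1
    · have hne : (D0 \ D1).Nonempty := by
        rw [← Finset.card_pos, hsd, Finset.card_pos]
        exact ⟨j0, Finset.mem_sdiff.mpr ⟨hj0D1, hj0D⟩⟩
      obtain ⟨i, hi⟩ := hne
      rw [Finset.mem_sdiff] at hi
      have h1' := htop0' i hi.1 j0 hj0D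
      have h2' := hgap i
      have h3' := hmax1 i hi.2
      omega
    · have h1' := hgap j0
      have h2' := hmax1 j0 hj0D1
      omega
  have hbadle : ∀ c : Fin nB, h1 (e1 c) ≤ h0 (e0 c) ∧ h0 (e0 c) ≤ h1 (e1 c) + 1 := by
    intro c
    obtain ⟨hi0, hi1⟩ := Finset.mem_sdiff.mp (he0 c)
    obtain ⟨hj1, hj0⟩ := Finset.mem_sdiff.mp (he1 c)
    constructor
    · exact le_trans (hdom _) (htop0' _ hi0 _ hj0)
    · have := htop1' _ hj1 _ hi1
      have := hgap (e0 c)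
      omega
  have hbadS : ∀ c : Fin nB, h0 (e0 c) ≠ h1 (e1 c) → h0 (e0 c) ≠ h1 (e0 c) := by
    intro c hne
    obtain ⟨hi0, hi1⟩ := Finset.mem_sdiff.mp (he0 c)
    obtain ⟨hj1, hj0⟩ := Finset.mem_sdiff.mp (he1 c)
    have h1' := htop1' _ hj1 _ hi1
    have h2' := (hbadle c).1
    omega
  -- witness for the ⊥ coordinate
  have hι : Nonempty ι := Fintype.card_pos_iff.mp (by omega)
  obtain ⟨w, hw⟩ : ∃ w : ι, a ≠ b →
      (h0 w ≠ h1 w ∧ w ∉ D0 ∩ D1 ∧ ∀ c : Fin nB, h0 (e0 c) ≠ h1 (e1 c) → e0 c ≠ w) := by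
    by_cases hab : a = b
    · exact ⟨Classical.arbitrary ι, fun h => absurd hab h⟩
    by_cases hj0S : h0 j0 ≠ h1 j0
    · refine ⟨j0, fun _ => ⟨hj0S, ?_, ?_⟩⟩
      · intro hmem; exact hj0D (Finset.mem_inter.mp hmem).1
      · intro c _ hEq; exact hj0D (hEq ▸ (Finset.mem_sdiff.mp (he0 c)).1)
    · push_neg at hj0S
      have hj0a : h1 j0 = a := by omega
      have hj0D1 : j0 ∈ D1 := by
        by_contra hn
        have := hmax1 j0 hn
        omega
      have hsurj : ∃ c0, e1 c0 = j0 := by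
        have himg : (Finset.univ.image e1) = D1 \ D0 := by
          apply Finset.eq_of_subset_of_card_le
          · intro x hx
            obtain ⟨c, _, rfl⟩ := Finset.mem_image.mp hx
            exact he1 c
          · rw [Finset.card_image_of_injective _ he1inj, Finset.card_univ, Fintype.card_fin,
              ← hsd, ← hnB]
        have : j0 ∈ Finset.univ.image e1 := by
          rw [himg]; exact Finset.mem_sdiff.mpr ⟨hj0D1, hj0D⟩
        obtain ⟨c, _, hc⟩ := Finset.mem_image.mp this
        exact ⟨c, hc⟩
      obtain ⟨c0, hc0⟩ := hsurj
      obtain ⟨hi0, hi1⟩ := Finset.mem_sdiff.mp (he0 c0)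
      have h0i : h0 (e0 c0) = a := by
        have h1' := htop0' _ hi0 j0 hj0D
        have h2' := hmax1 _ hi1
        have h3' := hgap (e0 c0)
        omega
      have hiS : h0 (e0 c0) ≠ h1 (e0 c0) := by
        have := hmax1 _ hi1
        omega
      refine ⟨e0 c0, fun _ => ⟨hiS, fun hmem => hi1 (Finset.mem_inter.mp hmem).2, ?_⟩⟩
      intro c hcne hEq
      have hcc : c = c0 := he0inj hEq
      subst hcc
      apply hcne
      rw [hc0]
      omega
  -- threshold difference
  have huabne : ∀ u : Unit, v0 (.inr u) ≠ v1 (.inr u) → a ≠ b := by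
    intro u hne hab
    apply hne
    rw [hv0u, hv1u, hab]
  -- common coordinate differences
  have hcoS : ∀ i : ι, v0 (.inl (.inl i)) ≠ v1 (.inl (.inl i)) →
      i ∈ D0 ∩ D1 ∧ h0 i ≠ h1 i := by
    intro i hne
    by_cases hiC : i ∈ D0 ∩ D1
    · refine ⟨hiC, fun heq => hne ?_⟩
      rw [hv0c, hv1c, if_pos hiC, if_pos hiC, heq]
    · exact absurd (by rw [hv0c, hv1c, if_neg hiC, if_neg hiC]) hne
  have hbadne : ∀ c : Fin nB, v0 (.inl (.inr c)) ≠ v1 (.inl (.inr c)) →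
      h0 (e0 c) ≠ h1 (e1 c) := by
    intro c hne heq
    apply hne
    rw [hv0b, hv1b, heq]
  -- Part 1
  have hTcard : {i : ι | h0 i ≠ h1 i}.ncard ≤ Δ0 := by
    have hset : {i : ι | h0 i ≠ h1 i} = ↑(Finset.univ.filter (fun i => h0 i ≠ h1 i)) := by
      ext i; simp
    rw [hset, Set.ncard_coe_finset]
    exact hl0
  have part1 : Set.ncard {x | v0 x ≠ v1 x} ≤ Δ0 := by
    refine le_trans (Set.ncard_le_ncard_of_injOn
      (fun x => match x with
        | .inl (.inl i) => i
        | .inl (.inr c) => e0 c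
        | .inr _ => w) ?_ ?_ (Set.toFinite _)) hTcard
    · rintro (⟨i | c⟩ | u) hx
      · exact (hcoS i hx).2
      · exact hbadS c (hbadne c hx)
      · exact ((hw (huabne u hx))).1
    · rintro (⟨i | c⟩ | u) hx (⟨i' | c'⟩ | u') hy hF <;>
        simp only [Set.mem_setOf_eq] at hx hy
      · simpa using hF
      · exfalso
        have hi := (hcoS i hx).1
        have := (Finset.mem_sdiff.mp (he0 c')).2
        simp only at hF
        rw [hF] at hi
        exact this (Finset.mem_inter.mp hi).2
      · exfalso
        have hi := (hcoS i hx).1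
        have hwn := (hw (huabne u' hy)).2.1
        simp only at hF
        rw [hF] at hi
        exact hwn hi
      · exfalso
        have hi := (hcoS i' hy).1
        have := (Finset.mem_sdiff.mp (he0 c)).2
        simp only at hF
        rw [← hF] at hi
        exact this (Finset.mem_inter.mp hi).2
      · simp only at hF
        rw [he0inj hF]
      · exfalso
        exact (hw (huabne u' hy)).2.2 c (hbadne c hx) hF
      · exfalso
        have hi := (hcoS i' hy).1
        have hwn := (hw (huabne u hx)).2.1
        simp only at hF
        rw [← hF] at hi
        exact hwn hi
      · exfalso
        exact (hw (huabne u hx)).2.2 c' (hbadne c' hy) hF.symm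
      · cases u; cases u'; rfl
  -- Part 2
  have har : (b : ℝ) ≤ a := Nat.cast_le.mpr hba
  have har2 : (a : ℝ) ≤ b + 1 := by exact_mod_cast hab1
  have part2 : ∀ x, |v0 x - v1 x| ≤ 1 := by
    rintro (⟨i | c⟩ | u)
    · rw [hv0c, hv1c]
      by_cases hiC : i ∈ D0 ∩ D1
      · rw [if_pos hiC, if_pos hiC]
        have A : (h1 i : ℝ) ≤ h0 i := Nat.cast_le.mpr (hdom i)
        have B : (h0 i : ℝ) ≤ h1 i + 1 := by exact_mod_cast hgap i
        rw [abs_le]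
        constructor <;> linarith
      · rw [if_neg hiC, if_neg hiC]
        simp
    · rw [hv0b, hv1b]
      have A : (h1 (e1 c) : ℝ) ≤ h0 (e0 c) := Nat.cast_le.mpr (hbadle c).1
      have B : (h0 (e0 c) : ℝ) ≤ h1 (e1 c) + 1 := by exact_mod_cast (hbadle c).2
      rw [abs_le]
      constructor <;> linarith
    · rw [hv0u, hv1u]
      have : (a : ℝ) + 1 + Real.sqrt 2 * τ * q - ((b : ℝ) + 1 + Real.sqrt 2 * τ * q)
          = (a : ℝ) - b := by ring
      rw [this, abs_le]
      constructor <;> linarith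
  refine ⟨part1, part2, ?_⟩
  -- Part 3
  have hcardX : (Finset.univ.filter (fun x => v0 x ≠ v1 x)).card ≤ Δ0 := by
    have hset : {x | v0 x ≠ v1 x} = ↑(Finset.univ.filter (fun x => v0 x ≠ v1 x)) := by
      ext x; simp
    rw [hset, Set.ncard_coe_finset] at part1
    exact part1
  have hsum : ∑ x, (v0 x - v1 x) ^ 2 ≤ (Δ0 : ℝ) := by
    calc ∑ x, (v0 x - v1 x) ^ 2
        = ∑ x ∈ Finset.univ.filter (fun x => v0 x ≠ v1 x), (v0 x - v1 x) ^ 2 := by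
          rw [Finset.sum_filter_of_ne]
          intro x _ hx
          intro heq
          apply hx
          rw [heq, sub_self]
          ring
      _ ≤ ∑ x ∈ Finset.univ.filter (fun x => v0 x ≠ v1 x), 1 := by
          refine Finset.sum_le_sum fun x _ => ?_
          rw [sq_le_one_iff_abs_le_one]
          exact part2 x
      _ = (Finset.univ.filter (fun x => v0 x ≠ v1 x)).card := by
          rw [Finset.sum_const, nsmul_eq_mul, mul_one]
      _ ≤ (Δ0 : ℝ) := Nat.cast_le.mpr hcardX
  exact Real.sqrt_le_sqrt hsum
end
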